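/- Let G be a c-edge-colored multigraph, c ≥ 3, in which every vertex is incident to at least two edges of different colors and at least one vertex is incident to at least three edges of pairwise different colors. If δ_dym(x) + δ_dym(y) ≥ n + 1 for every pair of distinct vertices x and y (where n = |V(G)|), then G has a properly colored hamiltonian cycle. -/

import Mathlib

/-- A loopless multigraph whose edges are colored by vertices of a graph `H`
(given by the adjacency relation `adjH` on the color type `C`). -/
structure HCMultigraph (V C : Type) where
  E : Type
  ends : E → Sym2 V
  loopless : ∀ e, ¬ (ends e).IsDiag
  col : E → C

namespace HCMultigraph

variable {V C : Type} (adjH : C → C → Prop) (M : HCMultigraph V C)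

/-- `E_{uv}`: the set of edges of `M` with end vertices `u` and `v`. -/
def EdgesBetween (u v : V) : Set M.E := {e | M.ends e = s(u, v)}

/-- The neighborhood in `H` of a color. -/
def NH (a : C) : Set C := {b | adjH a b}

/-- `E_{uv}` is a dynamic edge set: it contains two edges whose colors have
incomparable neighborhoods in `H`. -/
def DynamicEdgeSet (u v : V) : Prop :=
  ∃ e ∈ M.EdgesBetween u v, ∃ f ∈ M.EdgesBetween u v,
    ¬ NH adjH (M.col e) ⊆ NH adjH (M.col f) ∧
    ¬ NH adjH (M.col f) ⊆ NH adjH (M.col e)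

/-- The set of edges incident with `u` (vertex set of the auxiliary graph `G_u`). -/
def Incident (u : V) : Set M.E := {e | u ∈ M.ends e}

/-- The auxiliary graph `G_u` (edges incident with `u`, adjacency given by
adjacency of colors in `H`) is a complete multipartite graph with at least `k`
(nonempty) parts. -/
def CompleteMultipartite (k : ℕ) (u : V) : Prop :=
  ∃ p : M.Incident u → ℕ,
    (∀ a b : M.Incident u, a ≠ b →
      (adjH (M.col a.1) (M.col b.1) ↔ p a ≠ p b)) ∧
    k ≤ (Set.range p).ncard

/-- The dynamic degree of `u`: the number of vertices `v` such that `E_{uv}` is a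
dynamic edge set. -/
noncomputable def dynDegree (u : V) : ℕ := {v | M.DynamicEdgeSet adjH u v}.ncard

/-- An `H`-path of length `k`: distinct vertices `x 0, …, x k`, edges
`e i ∈ E_{x i, x (i+1)}`, consecutive edge colors adjacent in `H`. -/
def IsHPath (k : ℕ) (x : ℕ → V) (e : ℕ → M.E) : Prop :=
  (∀ i ≤ k, ∀ j ≤ k, x i = x j → i = j) ∧
  (∀ i < k, e i ∈ M.EdgesBetween (x i) (x (i + 1))) ∧
  (∀ i, i + 1 < k → adjH (M.col (e i)) (M.col (e (i + 1))))

/-- An `H`-cycle of length `k + 1`: distinct vertices `x 0, …, x k`, edges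
`e i ∈ E_{x i, x (i+1)}` and `e k ∈ E_{x k, x 0}`, with consecutive edge colors
(cyclically) adjacent in `H`. -/
def IsHCycle (k : ℕ) (x : ℕ → V) (e : ℕ → M.E) : Prop :=
  (∀ i ≤ k, ∀ j ≤ k, x i = x j → i = j) ∧
  (∀ i < k, e i ∈ M.EdgesBetween (x i) (x (i + 1))) ∧
  e k ∈ M.EdgesBetween (x k) (x 0) ∧
  (∀ i < k, adjH (M.col (e i)) (M.col (e (i + 1)))) ∧
  adjH (M.col (e k)) (M.col (e 0))

/-- A dynamic `H`-cycle with at most one change, on the distinct vertices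
`x 0, …, x k` (of length `k + 1`): either a genuine (closed) `H`-cycle, or an
`H`-path closed up with two parallel edges `e k, g ∈ E_{x k, x 0}` (one change). -/
def DynCycleOneChange (k : ℕ) (x : ℕ → V) : Prop :=
  (∀ i ≤ k, ∀ j ≤ k, x i = x j → i = j) ∧
  ∃ e : ℕ → M.E,
    (∀ i < k, e i ∈ M.EdgesBetween (x i) (x (i + 1))) ∧
    e k ∈ M.EdgesBetween (x k) (x 0) ∧
    (∀ i < k, adjH (M.col (e i)) (M.col (e (i + 1)))) ∧
    (adjH (M.col (e k)) (M.col (e 0)) ∨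
      ∃ g ∈ M.EdgesBetween (x k) (x 0), adjH (M.col g) (M.col (e 0)))

end HCMultigraph

open HCMultigraph


set_option linter.unusedSectionVars false
set_option linter.unusedVariables false
set_option maxHeartbeats 1000000

namespace Stmt14aux

def nthd {α : Type} [Inhabited α] (l : List α) (i : ℕ) : α := l.getD i default

lemma nthd_eq_getElem {α : Type} [Inhabited α] {l : List α} {i : ℕ} (h : i < l.length) :
    nthd l i = l[i] := List.getD_eq_getElem l default h

@[simp] lemma nthd_cons_zero {α : Type} [Inhabited α] (x : α) (l : List α) :
    nthd (x :: l) 0 = x := rfl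

@[simp] lemma nthd_cons_succ {α : Type} [Inhabited α] (x : α) (l : List α) (i : ℕ) :
    nthd (x :: l) (i+1) = nthd l i := rfl

section Colors
variable {C : Type} [DecidableEq C] [Inhabited C]

def Sv : C → List (Finset C) → C → Prop
  | a, [], b => a ≠ b
  | a, s :: r, b => ∃ x ∈ s, x ≠ a ∧ Sv x r b

def ChTo : C → List (Finset C) → C → Prop
  | a, [], b => a = b
  | a, s :: r, b => ∃ p, s = {a, p} ∧ a ≠ p ∧ ChTo p r b

lemma sv_unique : ∀ {L : List (Finset C)}, L ≠ [] → (∀ s ∈ L, 2 ≤ s.card) →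
    ∀ {b a₁ a₂ : C}, ¬ Sv a₁ L b → ¬ Sv a₂ L b → a₁ = a₂ := by
  intro L
  induction L with
  | nil => simp
  | cons s r ih =>
    intro _ h2 b a₁ a₂ h₁ h₂
    by_contra hne
    have h₁' : ∀ x ∈ s, x ≠ a₁ → ¬ Sv x r b := by
      intro x hx hxa hs; exact h₁ ⟨x, hx, hxa, hs⟩
    have h₂' : ∀ x ∈ s, x ≠ a₂ → ¬ Sv x r b := by
      intro x hx hxa hs; exact h₂ ⟨x, hx, hxa, hs⟩
    obtain ⟨x, hx, y, hy, hxy⟩ := Finset.one_lt_card.mp (h2 s (by simp))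
    rcases List.eq_nil_or_concat r with hr | ⟨_, _, hrne⟩
    · subst hr
      have key : ∀ z ∈ s, z = b := by
        intro z hz
        by_contra hzb
        have hza1 : z = a₁ := by
          by_contra hza; exact hzb (not_not.mp (h₁' z hz hza))
        have hza2 : z = a₂ := by
          by_contra hza; exact hzb (not_not.mp (h₂' z hz hza))
        exact hne (hza1 ▸ hza2 ▸ rfl)
      exact hxy ((key x hx).trans (key y hy).symm)
    · have hrne' : r ≠ [] := by rintro rfl; simp at hrne
      have key : ∀ z ∈ s, ¬ Sv z r b := by
        intro z hz
        by_cases hza1 : z = a₁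
        · by_cases hza2 : z = a₂
          · exact absurd (hza1 ▸ hza2 ▸ rfl) hne
          · exact h₂' z hz hza2
        · exact h₁' z hz hza1
      exact hxy (ih hrne' (fun t ht => h2 t (by simp [ht])) (key x hx) (key y hy))

lemma pair_card_le {a b : C} : ({a, b} : Finset C).card ≤ 2 := by
  apply le_trans (Finset.card_insert_le _ _); simp

lemma sv_chain : ∀ {L : List (Finset C)}, (∀ s ∈ L, 2 ≤ s.card) →
    ∀ {a b : C}, ¬ Sv a L b → ChTo a L b := by
  intro L
  induction L with
  | nil => intro _ a b h; simpa [Sv, ChTo] using h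
  | cons s r ih =>
    intro h2 a b h
    have h' : ∀ x ∈ s, x ≠ a → ¬ Sv x r b := by
      intro x hx hxa hs; exact h ⟨x, hx, hxa, hs⟩
    have hcard := h2 s (by simp)
    obtain ⟨x₀, hx₀, hx₀a⟩ := Finset.exists_mem_ne hcard a
    rcases List.eq_nil_or_concat r with hr | ⟨_, _, hrne⟩
    · subst hr
      have hx₀b : x₀ = b := not_not.mp (h' x₀ hx₀ hx₀a)
      have hsub : s ⊆ {a, b} := by
        intro z hz
        by_cases hza : z = a
        · simp [hza]
        · have := not_not.mp (h' z hz hza); simp [this]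
      have hseq : s = {a, b} := Finset.eq_of_subset_of_card_le hsub (le_trans pair_card_le hcard)
      have hab : a ≠ b := by
        rintro rfl
        rw [hseq] at hcard; simp at hcard
      exact ⟨b, hseq, hab, rfl⟩
    · have hrne' : r ≠ [] := by rintro rfl; simp at hrne
      have hx₀s : ¬ Sv x₀ r b := h' x₀ hx₀ hx₀a
      have hsub : s ⊆ {a, x₀} := by
        intro z hz
        by_cases hza : z = a
        · simp [hza]
        · have hz' := h' z hz hza
          have := sv_unique hrne' (fun t ht => h2 t (by simp [ht])) hz' hx₀s
          simp [this]
      have hseq : s = {a, x₀} := Finset.eq_of_subset_of_card_le hsub (le_trans pair_card_le hcard)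
      exact ⟨x₀, hseq, Ne.symm hx₀a, ih (fun t ht => h2 t (by simp [ht])) hx₀s⟩

lemma chain_pair : ∀ {L : List (Finset C)} {a₁ b₁ a₂ b₂ : C}, a₁ ≠ a₂ →
    ChTo a₁ L b₁ → ChTo a₂ L b₂ →
    (∀ s ∈ L, s = {a₁, a₂}) ∧ (Even L.length → b₁ = a₁ ∧ b₂ = a₂) ∧
      (¬ Even L.length → b₁ = a₂ ∧ b₂ = a₁) := by
  intro L
  induction L with
  | nil =>
    intro a₁ b₁ a₂ b₂ hne h1 h2
    refine ⟨by simp, fun _ => ⟨h1.symm, h2.symm⟩, fun h => absurd (by simp) h⟩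
  | cons s r ih =>
    intro a₁ b₁ a₂ b₂ hne h1 h2
    obtain ⟨p₁, hs₁, hp₁, hc₁⟩ := h1
    obtain ⟨p₂, hs₂, hp₂, hc₂⟩ := h2
    have ha₂s : a₂ ∈ s := by rw [hs₂]; simp
    have ha₁s : a₁ ∈ s := by rw [hs₁]; simp
    have hp₁a₂ : p₁ = a₂ := by
      rw [hs₁] at ha₂s; rcases Finset.mem_insert.mp ha₂s with h | h
      · exact absurd h.symm hne
      · exact (Finset.mem_singleton.mp h).symm
    have hp₂a₁ : p₂ = a₁ := by
      rw [hs₂] at ha₁s; rcases Finset.mem_insert.mp ha₁s with h | h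
      · exact absurd h hne
      · exact (Finset.mem_singleton.mp h).symm
    subst hp₁a₂; subst hp₂a₁
    obtain ⟨hall, heven, hodd⟩ := ih (Ne.symm hne) hc₁ hc₂
    refine ⟨?_, ?_, ?_⟩
    · intro t ht
      rcases List.mem_cons.mp ht with rfl | ht'
      · exact hs₁
      · rw [hall t ht', Finset.pair_comm]
    · intro he
      have : ¬ Even r.length := by
        simp only [List.length_cons, Nat.even_add_one] at he; exact he
      obtain ⟨hb₁, hb₂⟩ := hodd this
      exact ⟨hb₁, hb₂⟩
    · intro ho
      have : Even r.length := by
        simp only [List.length_cons, Nat.even_add_one, not_not] at ho; exact ho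
      obtain ⟨hb₁, hb₂⟩ := heven this
      exact ⟨hb₁, hb₂⟩

lemma sv_ext : ∀ {L : List (Finset C)} {a b : C}, Sv a L b →
    ∃ cs : List C, cs.length = L.length ∧ (∀ i < L.length, nthd cs i ∈ nthd L i) ∧
      (∀ i, i + 1 < L.length → nthd cs i ≠ nthd cs (i+1)) ∧
      (L ≠ [] → nthd cs 0 ≠ a ∧ nthd cs (L.length - 1) ≠ b) := by
  intro L
  induction L with
  | nil => intro a b _; exact ⟨[], rfl, by intro i hi; simp at hi, by intro i hi; simp at hi, by simp⟩
  | cons s r ih =>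
    intro a b hsv
    obtain ⟨x, hx, hxa, hsv'⟩ := hsv
    obtain ⟨cs', hlen, hmem, hcons, hlast⟩ := ih hsv'
    refine ⟨x :: cs', by simp [hlen], ?_, ?_, ?_⟩
    · intro i hi
      cases i with
      | zero => simpa using hx
      | succ j => simp only [nthd_cons_succ]; exact hmem j (by simpa using hi)
    · intro i hi
      cases i with
      | zero =>
        have hrne : r ≠ [] := by
          intro h; subst h; simp at hi
        simp only [nthd_cons_succ, nthd_cons_zero]
        exact Ne.symm ((hlast hrne).1)
      | succ j =>
        simp only [nthd_cons_succ]
        exact hcons j (by simpa using hi)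
    · intro _
      constructor
      · simpa using hxa
      · rcases List.eq_nil_or_concat r with hr | ⟨_, _, hrne⟩
        · subst hr
          simpa [Sv] using hsv'
        · have hrne' : r ≠ [] := by rintro rfl; simp at hrne
          have hrlen : r.length - 1 + 1 = r.length := by
            have : r.length ≠ 0 := by simpa using hrne'
            omega
          have : (s :: r).length - 1 = (r.length - 1) + 1 := by simp; omega
          rw [this, nthd_cons_succ]
          exact (hlast hrne').2

lemma grd : ∀ {L : List (Finset C)}, (∀ s ∈ L, 2 ≤ s.card) → ∀ (a : C),
    ∃ cs : List C, cs.length = L.length ∧ (∀ i < L.length, nthd cs i ∈ nthd L i) ∧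
      (∀ i, i + 1 < L.length → nthd cs i ≠ nthd cs (i+1)) ∧
      (L ≠ [] → nthd cs 0 ≠ a) := by
  intro L
  induction L with
  | nil => intro _ a; exact ⟨[], rfl, by intro i hi; simp at hi, by intro i hi; simp at hi, by simp⟩
  | cons s r ih =>
    intro h2 a
    obtain ⟨x, hx, hxa⟩ := Finset.exists_mem_ne (h2 s (by simp)) a
    obtain ⟨cs', hlen, hmem, hcons, hhead⟩ := ih (fun t ht => h2 t (by simp [ht])) x
    refine ⟨x :: cs', by simp [hlen], ?_, ?_, fun _ => by simpa using hxa⟩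
    · intro i hi
      cases i with
      | zero => simpa using hx
      | succ j => simp only [nthd_cons_succ]; exact hmem j (by simpa using hi)
    · intro i hi
      cases i with
      | zero =>
        have hrne : r ≠ [] := by intro h; subst h; simp at hi
        simp only [nthd_cons_succ, nthd_cons_zero]
        exact Ne.symm (hhead hrne)
      | succ j =>
        simp only [nthd_cons_succ]
        exact hcons j (by simpa using hi)

lemma cyccol {Ls : List (Finset C)} (hlen : 2 ≤ Ls.length) (h2 : ∀ s ∈ Ls, 2 ≤ s.card) :
    (∃ cs : List C, cs.length = Ls.length ∧ (∀ i < Ls.length, nthd cs i ∈ nthd Ls i) ∧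
      (∀ i, i + 1 < Ls.length → nthd cs i ≠ nthd cs (i+1)) ∧
      nthd cs (Ls.length - 1) ≠ nthd cs 0) ∨
    (Odd Ls.length ∧ ∃ x1 x2 : C, x1 ≠ x2 ∧ ∀ s ∈ Ls, s = {x1, x2}) := by
  obtain ⟨s, r, rfl⟩ : ∃ s r, Ls = s :: r := by
    cases Ls with
    | nil => simp at hlen
    | cons s r => exact ⟨s, r, rfl⟩
  have hrne : r ≠ [] := by
    intro h; subst h; simp at hlen
  have h2r : ∀ t ∈ r, 2 ≤ t.card := fun t ht => h2 t (by simp [ht])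
  by_cases hs : ∃ x ∈ s, Sv x r x
  · left
    obtain ⟨x, hx, hsv⟩ := hs
    obtain ⟨cs', hl, hmem, hcons, hlast⟩ := sv_ext hsv
    refine ⟨x :: cs', by simp [hl], ?_, ?_, ?_⟩
    · intro i hi
      cases i with
      | zero => simpa using hx
      | succ j => simp only [nthd_cons_succ]; exact hmem j (by simpa using hi)
    · intro i hi
      cases i with
      | zero =>
        simp only [nthd_cons_succ, nthd_cons_zero]
        exact Ne.symm ((hlast hrne).1)
      | succ j =>
        simp only [nthd_cons_succ]
        exact hcons j (by simpa using hi)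
    · have hrlen : (s :: r).length - 1 = (r.length - 1) + 1 := by
        have : r.length ≠ 0 := by simpa using hrne
        simp; omega
      rw [hrlen, nthd_cons_succ, nthd_cons_zero]
      exact (hlast hrne).2
  · right
    push_neg at hs
    have hch : ∀ x ∈ s, ChTo x r x := fun x hx => sv_chain h2r (hs x hx)
    obtain ⟨x1, hx1, x2, hx2, hne⟩ := Finset.one_lt_card.mp (h2 s (by simp))
    obtain ⟨hall, heven, hodd⟩ := chain_pair hne (hch x1 hx1) (hch x2 hx2)
    have hre : Even r.length := by
      by_contra ho
      exact hne ((hodd ho).1)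
    have hsub : s ⊆ {x1, x2} := by
      intro z hz
      obtain ⟨t, r', rfl⟩ : ∃ t r', r = t :: r' := by
        cases r with
        | nil => exact absurd rfl hrne
        | cons t r' => exact ⟨t, r', rfl⟩
      obtain ⟨p, htz, _, _⟩ := hch z hz
      have hzs : z ∈ t := by rw [htz]; simp
      rw [hall t (by simp)] at hzs
      exact hzs
    have hseq : s = {x1, x2} :=
      Finset.eq_of_subset_of_card_le hsub (le_trans pair_card_le (h2 s (by simp)))
    refine ⟨?_, x1, x2, hne, ?_⟩
    · simp only [List.length_cons]
      exact Even.add_one hre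
    · intro t ht
      rcases List.mem_cons.mp ht with rfl | ht'
      · exact hseq
      · exact hall t ht'

end Colors

section Graphs
variable {V : Type} [DecidableEq V] [Fintype V] [Inhabited V]

def PathL (R : V → V → Prop) (l : List V) : Prop :=
  ∀ i, i + 1 < l.length → R (nthd l i) (nthd l (i+1))

def CycL (R : V → V → Prop) (l : List V) : Prop :=
  ∀ i, i < l.length → R (nthd l i) (nthd l ((i+1) % l.length))

def IsHam (l : List V) : Prop := l.Nodup ∧ ∀ v : V, v ∈ l

def pairC (l : List V) (i : ℕ) (x y : V) : Prop :=
  (nthd l i = x ∧ nthd l ((i+1) % l.length) = y) ∨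
  (nthd l i = y ∧ nthd l ((i+1) % l.length) = x)

open Classical in
noncomputable def degR (R : V → V → Prop) (x : V) : ℕ :=
  (Finset.univ.filter (fun v => R x v)).card

lemma nthd_inj {l : List V} (hnd : l.Nodup) {i j : ℕ} (hi : i < l.length) (hj : j < l.length)
    (h : nthd l i = nthd l j) : i = j := by
  rw [nthd_eq_getElem hi, nthd_eq_getElem hj] at h
  exact (List.Nodup.getElem_inj_iff hnd).mp h

lemma ham_length {l : List V} (h : IsHam l) : l.length = Fintype.card V := by
  rw [← List.toFinset_card_of_nodup h.1]
  congr 1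
  apply Finset.eq_univ_iff_forall.mpr
  intro v; simpa using h.2 v

lemma exists_index {l : List V} (h : IsHam l) (v : V) : ∃ i, i < l.length ∧ nthd l i = v := by
  obtain ⟨i, hi, hv⟩ := List.mem_iff_getElem.mp (h.2 v)
  exact ⟨i, hi, by rw [nthd_eq_getElem hi]; exact hv⟩

lemma nthd_rotate {l : List V} {k i : ℕ} (h : i < l.length) :
    nthd (l.rotate k) i = nthd l ((i + k) % l.length) := by
  have h1 : i < (l.rotate k).length := by rwa [List.length_rotate]
  have h2 : (i + k) % l.length < l.length := Nat.mod_lt _ (by omega)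
  rw [nthd_eq_getElem h1, nthd_eq_getElem h2]
  exact List.getElem_rotate l k i h1

lemma isham_rotate {l : List V} (h : IsHam l) (k : ℕ) : IsHam (l.rotate k) :=
  ⟨List.nodup_rotate.mpr h.1, fun v => (List.mem_rotate).mpr (h.2 v)⟩

lemma mod_succ_shift {n i k : ℕ} (hn : 0 < n) : ((i+1) % n + k) % n = ((i + k) % n + 1) % n := by
  rw [Nat.mod_add_mod, Nat.mod_add_mod]
  congr 1
  omega

lemma cycL_rotate {R : V → V → Prop} {l : List V} (h : CycL R l) (k : ℕ) : CycL R (l.rotate k) := by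
  intro i hi
  rw [List.length_rotate] at hi
  have hn : 0 < l.length := by omega
  rw [List.length_rotate, nthd_rotate hi, nthd_rotate (Nat.mod_lt _ hn), mod_succ_shift hn]
  exact h _ (Nat.mod_lt _ hn)

lemma pairC_rotate {l : List V} {k i : ℕ} {x y : V} (hi : i < l.length)
    (h : pairC (l.rotate k) i x y) : pairC l ((i + k) % l.length) x y := by
  have hn : 0 < l.length := by omega
  unfold pairC at h ⊢
  rw [List.length_rotate, nthd_rotate hi, nthd_rotate (Nat.mod_lt _ hn), mod_succ_shift hn] at h
  exact h

lemma pairC_unique {l : List V} (hnd : l.Nodup) (hlen : 3 ≤ l.length) {c d : V} (hcd : c ≠ d)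
    {q q' : ℕ} (hq : q < l.length) (hq' : q' < l.length)
    (h1 : pairC l q c d) (h2 : pairC l q' c d) : q = q' := by
  set n := l.length with hn
  have hq1 : (q+1) % n < n := Nat.mod_lt _ (by omega)
  have hq'1 : (q'+1) % n < n := Nat.mod_lt _ (by omega)
  have key : ∀ a b : ℕ, a < n → b < n → (a+1) % n = b → (b+1) % n = a → False := by
    intro a b ha hb hab hba
    have : (a + 2) % n = a := by
      have : (a+1) % n + 1 = b + 1 := by rw [hab]
      calc (a+2) % n = ((a+1) % n + 1) % n := by rw [Nat.mod_add_mod]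
        _ = a := by rw [this, hba]
    rcases Nat.lt_or_ge (a+2) n with h | h
    · rw [Nat.mod_eq_of_lt h] at this; omega
    · rw [Nat.mod_eq_sub_mod h, Nat.mod_eq_of_lt (by omega)] at this
      omega
  rcases h1 with ⟨e1, e2⟩ | ⟨e1, e2⟩ <;> rcases h2 with ⟨f1, f2⟩ | ⟨f1, f2⟩
  · exact nthd_inj hnd hq hq' (e1.trans f1.symm)
  · -- q: (c,d), q': (d,c)
    exfalso
    have hA : (q+1) % n = q' := nthd_inj hnd hq1 hq' (e2.trans f1.symm)
    have hB : (q'+1) % n = q := nthd_inj hnd hq'1 hq (f2.trans e1.symm)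
    exact key q q' hq hq' hA hB
  · exfalso
    have hA : (q+1) % n = q' := nthd_inj hnd hq1 hq' (e2.trans f1.symm)
    have hB : (q'+1) % n = q := nthd_inj hnd hq'1 hq (f2.trans e1.symm)
    exact key q q' hq hq' hA hB
  · exact nthd_inj hnd hq hq' (e1.trans f1.symm)

lemma complete_cycle (R : V → V → Prop) (hcomp : ∀ a b : V, a ≠ b → R a b)
    {x y : V} (hxy : x ≠ y) (hn : 3 ≤ Fintype.card V) :
    ∃ l, IsHam l ∧ CycL R l ∧ ∃ i, i < l.length ∧ pairC l i x y := by
  classical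
  set rest := ((Finset.univ.erase x).erase y).toList with hrest
  set l := x :: y :: rest with hl
  have hnd : l.Nodup := by
    rw [hl, List.nodup_cons, List.nodup_cons]
    refine ⟨?_, ?_, Finset.nodup_toList _⟩
    · intro hmem
      rcases List.mem_cons.mp hmem with h | h
      · exact hxy h
      · have := Finset.mem_toList.mp h
        simp at this
    · intro hmem
      have := Finset.mem_toList.mp hmem
      simp at this
  have hham : IsHam l := by
    refine ⟨hnd, ?_⟩
    intro v
    by_cases hvx : v = x
    · simp [hl, hvx]
    · by_cases hvy : v = y
      · simp [hl, hvy]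
      · rw [hl]
        simp only [List.mem_cons]
        right; right
        rw [hrest, Finset.mem_toList]
        simp [hvx, hvy]
  have hlen : 3 ≤ l.length := by rw [ham_length hham]; exact hn
  refine ⟨l, hham, ?_, 0, by omega, ?_⟩
  · intro i hi
    apply hcomp
    intro heq
    have h1 : (i+1) % l.length < l.length := Nat.mod_lt _ (by omega)
    have := nthd_inj hnd hi h1 heq
    rcases Nat.lt_or_ge (i+1) l.length with h | h
    · rw [Nat.mod_eq_of_lt h] at this; omega
    · have hieq : i + 1 = l.length := by omega
      rw [hieq, Nat.mod_self] at this
      omega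
  · left
    constructor
    · rfl
    · have : (0+1) % l.length = 1 := Nat.mod_eq_of_lt (by omega)
      rw [this]
      rfl


lemma nthd_append_left {α : Type} [Inhabited α] {l1 l2 : List α} {i : ℕ} (h : i < l1.length) :
    nthd (l1 ++ l2) i = nthd l1 i := by
  rw [nthd_eq_getElem (by rw [List.length_append]; omega), nthd_eq_getElem h]
  exact List.getElem_append_left h

lemma nthd_append_right {α : Type} [Inhabited α] {l1 l2 : List α} {i : ℕ}
    (h1 : l1.length ≤ i) (h2 : i < l1.length + l2.length) :
    nthd (l1 ++ l2) i = nthd l2 (i - l1.length) := by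
  rw [nthd_eq_getElem (by rw [List.length_append]; omega), nthd_eq_getElem (by omega)]
  exact List.getElem_append_right h1

lemma nthd_take {α : Type} [Inhabited α] {l : List α} {k i : ℕ} (h : i < k) (h2 : i < l.length) :
    nthd (l.take k) i = nthd l i := by
  rw [nthd_eq_getElem (by rw [List.length_take]; omega), nthd_eq_getElem h2]
  exact List.getElem_take

lemma nthd_reverse {α : Type} [Inhabited α] {l : List α} {i : ℕ} (h : i < l.length) :
    nthd l.reverse i = nthd l (l.length - 1 - i) := by
  rw [nthd_eq_getElem (by rw [List.length_reverse]; omega), nthd_eq_getElem (by omega)]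
  exact List.getElem_reverse _

lemma nthd_drop {α : Type} [Inhabited α] {l : List α} {k i : ℕ} (h : k + i < l.length) :
    nthd (l.drop k) i = nthd l (k + i) := by
  rw [nthd_eq_getElem (by rw [List.length_drop]; omega), nthd_eq_getElem h]
  exact List.getElem_drop

lemma nthd_newl {l : List V} {j : ℕ} (hj : j + 1 < l.length) {i : ℕ} (hi : i < l.length) :
    nthd (l.take (j+1) ++ (l.drop (j+1)).reverse) i =
      if i ≤ j then nthd l i else nthd l (l.length + j - i) := by
  set n := l.length with hn
  have hlt : (l.take (j+1)).length = j + 1 := by rw [List.length_take]; omega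
  by_cases hij : i ≤ j
  · rw [if_pos hij, nthd_append_left (by omega), nthd_take (by omega) hi]
  · rw [if_neg hij]
    have hrl : ((l.drop (j+1)).reverse).length = n - (j+1) := by
      rw [List.length_reverse, List.length_drop]
    rw [nthd_append_right (by omega) (by rw [hrl, hlt]; omega)]
    rw [hlt]
    rw [nthd_reverse (by rw [List.length_drop]; omega)]
    rw [List.length_drop]
    rw [nthd_drop (by omega)]
    congr 1
    omega

lemma close_path (R : V → V → Prop) (hsym : ∀ a b, R a b → R b a) (hirr : ∀ a, ¬ R a a)
    (hore : ∀ x y : V, x ≠ y → Fintype.card V + 1 ≤ degR R x + degR R y)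
    {l : List V} (hham : IsHam l) (hpath : PathL R l) (hn : 3 ≤ Fintype.card V) (p : ℕ) :
    ∃ l' j, IsHam l' ∧ l'.length = l.length ∧ CycL R l' ∧ j + 1 < l.length ∧ j ≠ p ∧
      ∀ q, q + 1 < l.length → q ≠ j →
        ∃ i, i < l'.length ∧ pairC l' i (nthd l q) (nthd l (q+1)) := by
  classical
  have hlen : l.length = Fintype.card V := ham_length hham
  set n := l.length with hndef
  have hn3 : 3 ≤ n := by omega
  set a := nthd l 0 with ha
  set b := nthd l (n-1) with hb
  have hab : a ≠ b := by
    intro h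
    have := nthd_inj hham.1 (by omega) (by omega) h
    omega
  set S := (Finset.range (n-1)).filter (fun j => R a (nthd l (j+1))) with hS
  set T := (Finset.range (n-1)).filter (fun j => R b (nthd l j)) with hT
  have hidxfact : ∀ v : V, List.idxOf v l < n ∧ nthd l (List.idxOf v l) = v := by
    intro v
    have hvmem : v ∈ l := hham.2 v
    have hidx : List.idxOf v l < n := List.idxOf_lt_length_iff.mpr hvmem
    exact ⟨hidx, by rw [nthd_eq_getElem hidx]; exact List.getElem_idxOf hidx⟩
  have hScard : degR R a ≤ S.card := by
    apply Finset.card_le_card_of_injOn (fun v => List.idxOf v l - 1)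
    · intro v hv
      have hRav : R a v := by
        simp only [degR, Finset.mem_coe, Finset.mem_filter] at hv
        exact hv.2
      obtain ⟨hidx, hgetv⟩ := hidxfact v
      have hvne : v ≠ a := fun h => hirr a (h ▸ hRav)
      have hidx0 : List.idxOf v l ≠ 0 := by
        intro h; exact hvne (by rw [← hgetv, h])
      rw [hS, Finset.mem_coe, Finset.mem_filter, Finset.mem_range]
      beta_reduce
      refine ⟨by omega, ?_⟩
      have heq : List.idxOf v l - 1 + 1 = List.idxOf v l := by omega
      rw [heq, hgetv]; exact hRav
    · intro v1 hv1 v2 hv2 heq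
      simp only [degR, Finset.coe_filter, Set.mem_setOf_eq] at hv1 hv2
      obtain ⟨hidx1, hget1⟩ := hidxfact v1
      obtain ⟨hidx2, hget2⟩ := hidxfact v2
      have h01 : List.idxOf v1 l ≠ 0 := by
        intro h; exact hirr a ((by rw [← hget1, h] : v1 = a) ▸ hv1.2)
      have h02 : List.idxOf v2 l ≠ 0 := by
        intro h; exact hirr a ((by rw [← hget2, h] : v2 = a) ▸ hv2.2)
      have heq' : List.idxOf v1 l - 1 = List.idxOf v2 l - 1 := heq
      have : List.idxOf v1 l = List.idxOf v2 l := by omega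
      rw [← hget1, ← hget2, this]
  have hTcard : degR R b ≤ T.card := by
    apply Finset.card_le_card_of_injOn (fun v => List.idxOf v l)
    · intro v hv
      have hRbv : R b v := by
        simp only [degR, Finset.mem_coe, Finset.mem_filter] at hv
        exact hv.2
      obtain ⟨hidx, hgetv⟩ := hidxfact v
      have hvne : v ≠ b := fun h => hirr b (h ▸ hRbv)
      have hidxn : List.idxOf v l ≠ n - 1 := by
        intro h; exact hvne (by rw [← hgetv, h])
      rw [hT, Finset.mem_coe, Finset.mem_filter, Finset.mem_range]
      beta_reduce
      refine ⟨by omega, ?_⟩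
      rw [hgetv]; exact hRbv
    · intro v1 hv1 v2 hv2 heq
      obtain ⟨hidx1, hget1⟩ := hidxfact v1
      obtain ⟨hidx2, hget2⟩ := hidxfact v2
      have heq' : List.idxOf v1 l = List.idxOf v2 l := heq
      rw [← hget1, ← hget2, heq']
  have hST : 2 ≤ (S ∩ T).card := by
    have hunion : (S ∪ T).card ≤ n - 1 := by
      apply le_trans (Finset.card_le_card (by
        intro z hz
        rcases Finset.mem_union.mp hz with h | h
        · exact Finset.mem_of_mem_filter z h
        · exact Finset.mem_of_mem_filter z h))
      simp
    have hsum := Finset.card_inter_add_card_union S T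
    have hore' := hore a b hab
    rw [← hlen] at hore'
    omega
  have hep : ((S ∩ T).erase p).Nonempty := by
    rw [← Finset.card_pos]
    have := Finset.pred_card_le_card_erase (s := S ∩ T) (a := p)
    omega
  obtain ⟨j, hjep⟩ := hep
  have hjp : j ≠ p := (Finset.mem_erase.mp hjep).1
  have hjST := (Finset.mem_erase.mp hjep).2
  have hjS := Finset.mem_inter.mp hjST |>.1
  have hjT := Finset.mem_inter.mp hjST |>.2
  have hjn : j < n - 1 := Finset.mem_range.mp (Finset.mem_filter.mp hjS).1
  have hRaj : R a (nthd l (j+1)) := (Finset.mem_filter.mp hjS).2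
  have hRbj : R b (nthd l j) := (Finset.mem_filter.mp hjT).2
  set l' := l.take (j+1) ++ (l.drop (j+1)).reverse with hl'
  have hlen' : l'.length = n := by
    rw [hl', List.length_append, List.length_take, List.length_reverse, List.length_drop]
    omega
  have hform : ∀ i, i < n → nthd l' i = if i ≤ j then nthd l i else nthd l (n + j - i) :=
    fun i hi => nthd_newl (by omega) hi
  have hperm : l'.Perm l := by
    have h1 := List.Perm.append_left (l.take (j+1)) (List.reverse_perm (l.drop (j+1)))
    rwa [List.take_append_drop] at h1
  have hham' : IsHam l' := ⟨hperm.nodup_iff.mpr hham.1, fun v => hperm.mem_iff.mpr (hham.2 v)⟩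
  refine ⟨l', j, hham', hlen', ?_, by omega, hjp, ?_⟩
  · intro i hi
    rw [hlen'] at hi ⊢
    rcases Nat.lt_or_ge i j with hij | hij
    · have h1 : (i+1) % n = i + 1 := Nat.mod_eq_of_lt (by omega)
      rw [h1, hform i hi, hform (i+1) (by omega), if_pos (by omega), if_pos (by omega)]
      exact hpath i (by omega)
    by_cases hieq : i = j
    · have h1 : (i+1) % n = i + 1 := Nat.mod_eq_of_lt (by omega)
      rw [h1, hform i hi, hform (i+1) (by omega), if_pos (by omega), if_neg (by omega)]
      have h2 : n + j - (i+1) = n - 1 := by omega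
      rw [h2, hieq]
      exact hsym _ _ hRbj
    have hij' : j < i := by omega
    rcases Nat.lt_or_ge i (n-1) with hin | hin
    · have h1 : (i+1) % n = i + 1 := Nat.mod_eq_of_lt (by omega)
      rw [h1, hform i hi, hform (i+1) (by omega), if_neg (by omega), if_neg (by omega)]
      have h2 : n + j - i = (n + j - (i+1)) + 1 := by omega
      rw [h2]
      exact hsym _ _ (hpath (n + j - (i+1)) (by omega))
    · have hieq : i = n - 1 := by omega
      subst hieq
      have h1 : (n - 1 + 1) % n = 0 := by
        have : n - 1 + 1 = n := by omega
        rw [this, Nat.mod_self]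
      rw [h1, hform (n-1) (by omega), hform 0 (by omega), if_neg (by omega), if_pos (by omega)]
      have : n + j - (n-1) = j + 1 := by omega
      rw [this]
      exact hsym _ _ hRaj
  · intro q hq hqj
    rcases Nat.lt_or_ge q j with hqlt | hqge
    · refine ⟨q, by omega, ?_⟩
      left
      have h1 : (q+1) % l'.length = q + 1 := by rw [hlen']; exact Nat.mod_eq_of_lt (by omega)
      rw [h1, hform q (by omega), hform (q+1) (by omega), if_pos (by omega), if_pos (by omega)]
      exact ⟨rfl, rfl⟩
    · have hqgt : j < q := by omega
      refine ⟨n + j - q - 1, by omega, ?_⟩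
      right
      have hi1 : n + j - q - 1 + 1 = n + j - q := by omega
      have h1 : (n + j - q - 1 + 1) % l'.length = n + j - q := by
        rw [hlen', hi1]; exact Nat.mod_eq_of_lt (by omega)
      rw [h1, hform (n + j - q - 1) (by omega), hform (n + j - q) (by omega),
        if_neg (by omega), if_neg (by omega)]
      constructor
      · congr 1; omega
      · congr 1; omega


lemma shift_ne_special {n q i : ℕ} (hq : q < n) (hi : i + 1 < n) : (i + (q+1)) % n ≠ q := by
  intro h
  have h2 : (i + 1 + q) % n = (0 + q) % n := by
    have : i + (q+1) = i + 1 + q := by omega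
    rw [← this, h, Nat.zero_add, Nat.mod_eq_of_lt hq]
  have h3 : (i + 1) ≡ 0 [MOD n] := Nat.ModEq.add_right_cancel' q h2
  have h4 : n ∣ i + 1 := Nat.modEq_zero_iff_dvd.mp h3
  have := Nat.le_of_dvd (by omega) h4
  omega

lemma shift_last {n q : ℕ} (hq : q < n) : ((n-1) + (q+1)) % n = q := by
  have h1 : (n-1) + (q+1) = n + q := by omega
  rw [h1, Nat.add_mod_left, Nat.mod_eq_of_lt hq]

lemma mod_shift_surj {n : ℕ} (hn : 0 < n) (k s : ℕ) (hs : s < n) :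
    ∃ t, t < n ∧ (t + k) % n = s := by
  have hf : Function.Injective (fun t : Fin n => (⟨(t.1 + k) % n, Nat.mod_lt _ hn⟩ : Fin n)) := by
    intro t1 t2 h
    simp only [Fin.mk.injEq] at h
    have h2 : t1.1 ≡ t2.1 [MOD n] := Nat.ModEq.add_right_cancel' k h
    have := h2.eq_of_lt_of_lt t1.2 t2.2
    exact Fin.ext this
  have hsurj := (Finite.injective_iff_surjective).mp hf
  obtain ⟨t, ht⟩ := hsurj ⟨s, hs⟩
  refine ⟨t.1, t.2, ?_⟩
  simpa [Fin.ext_iff] using ht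

lemma deg_mono {R R' : V → V → Prop} (h : ∀ a b, R a b → R' a b) (x : V) :
    degR R x ≤ degR R' x := by
  classical
  unfold degR
  apply Finset.card_le_card
  intro v hv
  simp only [Finset.mem_filter] at hv ⊢
  exact ⟨hv.1, h x v hv.2⟩

lemma eih_aux (hn : 3 ≤ Fintype.card V) : ∀ (m : ℕ) (R : V → V → Prop),
    {pq : V × V | pq.1 ≠ pq.2 ∧ ¬ R pq.1 pq.2}.ncard ≤ m →
    (∀ a b, R a b → R b a) → (∀ a, ¬ R a a) →
    (∀ x y : V, x ≠ y → Fintype.card V + 1 ≤ degR R x + degR R y) →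
    ∀ x y, R x y → ∃ l, IsHam l ∧ CycL R l ∧ ∃ i, i < l.length ∧ pairC l i x y := by
  classical
  intro m
  induction m with
  | zero =>
    intro R hcard hsym hirr hore x y hxy
    have hcomp : ∀ a b : V, a ≠ b → R a b := by
      intro a b hab
      by_contra hR
      have hmem : (a, b) ∈ {pq : V × V | pq.1 ≠ pq.2 ∧ ¬ R pq.1 pq.2} := ⟨hab, hR⟩
      have := (Set.ncard_pos (Set.toFinite _)).mpr ⟨_, hmem⟩
      omega
    exact complete_cycle R hcomp (fun h => hirr x (h ▸ hxy)) hn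
  | succ m ih =>
    intro R hcard hsym hirr hore x y hxy
    by_cases hcomp : ∀ a b : V, a ≠ b → R a b
    · exact complete_cycle R hcomp (fun h => hirr x (h ▸ hxy)) hn
    · push_neg at hcomp
      obtain ⟨cc, dd, hccdd, hnR⟩ := hcomp
      set R' := fun p q => R p q ∨ (p = cc ∧ q = dd) ∨ (p = dd ∧ q = cc) with hR'
      have hsym' : ∀ a b, R' a b → R' b a := by
        intro a b h
        rcases h with h | ⟨h1, h2⟩ | ⟨h1, h2⟩
        · exact Or.inl (hsym a b h)
        · exact Or.inr (Or.inr ⟨h2, h1⟩)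
        · exact Or.inr (Or.inl ⟨h2, h1⟩)
      have hirr' : ∀ a, ¬ R' a a := by
        intro a h
        rcases h with h | ⟨h1, h2⟩ | ⟨h1, h2⟩
        · exact hirr a h
        · exact hccdd (h1 ▸ h2 ▸ rfl)
        · exact hccdd (h2 ▸ h1 ▸ rfl)
      have hmono : ∀ a b, R a b → R' a b := fun a b h => Or.inl h
      have hore' : ∀ p q : V, p ≠ q → Fintype.card V + 1 ≤ degR R' p + degR R' q := by
        intro p q hpq
        exact le_trans (hore p q hpq) (Nat.add_le_add (deg_mono hmono p) (deg_mono hmono q))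
      have hcard' : {pq : V × V | pq.1 ≠ pq.2 ∧ ¬ R' pq.1 pq.2}.ncard ≤ m := by
        have hss : {pq : V × V | pq.1 ≠ pq.2 ∧ ¬ R' pq.1 pq.2} ⊂
            {pq : V × V | pq.1 ≠ pq.2 ∧ ¬ R pq.1 pq.2} := by
          constructor
          · intro pq hpq
            exact ⟨hpq.1, fun hr => hpq.2 (Or.inl hr)⟩
          · intro hsub
            have hmem : (cc, dd) ∈ {pq : V × V | pq.1 ≠ pq.2 ∧ ¬ R pq.1 pq.2} := ⟨hccdd, hnR⟩
            have := hsub hmem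
            exact this.2 (Or.inr (Or.inl ⟨rfl, rfl⟩))
        have := Set.ncard_lt_ncard hss (Set.toFinite _)
        omega
      obtain ⟨l, hham, hcyc, i0, hi0, hpair⟩ := ih R' hcard' hsym' hirr' hore' x y (Or.inl hxy)
      have hlen : l.length = Fintype.card V := ham_length hham
      set n := l.length with hndef
      have hn0 : 0 < n := by omega
      by_cases hcd : ∃ q, q < n ∧ pairC l q cc dd
      · obtain ⟨q, hq, hqpair⟩ := hcd
        have huniq : ∀ q', q' < n → pairC l q' cc dd → q' = q := fun q' hq' h' =>
          pairC_unique hham.1 (by omega) hccdd hq' hq h' hqpair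
        have hi0q : i0 ≠ q := by
          intro h
          subst h
          rcases hpair with ⟨e1, e2⟩ | ⟨e1, e2⟩ <;> rcases hqpair with ⟨f1, f2⟩ | ⟨f1, f2⟩
          · exact hnR ((e1.symm.trans f1) ▸ (e2.symm.trans f2) ▸ hxy)
          · exact hnR (hsym _ _ ((e1.symm.trans f1) ▸ (e2.symm.trans f2) ▸ hxy))
          · exact hnR (hsym _ _ ((e1.symm.trans f1) ▸ (e2.symm.trans f2) ▸ hxy))
          · exact hnR ((e1.symm.trans f1) ▸ (e2.symm.trans f2) ▸ hxy)
        set lP := l.rotate (q+1) with hlP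
        have hlenP : lP.length = n := by rw [hlP, List.length_rotate]
        have hhamP : IsHam lP := isham_rotate hham (q+1)
        have hnth : ∀ i, i < n → nthd lP i = nthd l ((i + (q+1)) % n) := by
          intro i hi
          exact nthd_rotate (by omega)
        have hsucc : ∀ i : ℕ, (i + 1 + (q+1)) % n = ((i + (q+1)) % n + 1) % n := by
          intro i
          rw [Nat.mod_add_mod]
          congr 1
          omega
        have hPpath : PathL R lP := by
          intro i hi
          rw [hlenP] at hi
          rw [hnth i (by omega), hnth (i+1) (by omega), hsucc i]
          have hcyc' := hcyc ((i + (q+1)) % n) (Nat.mod_lt _ hn0)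
          rcases hcyc' with h | ⟨h1, h2⟩ | ⟨h1, h2⟩
          · exact h
          · exact absurd (huniq _ (Nat.mod_lt _ hn0) (Or.inl ⟨h1, h2⟩))
              (shift_ne_special hq hi)
          · exact absurd (huniq _ (Nat.mod_lt _ hn0) (Or.inr ⟨h1, h2⟩))
              (shift_ne_special hq hi)
        obtain ⟨t, htn, hts⟩ := mod_shift_surj hn0 (q+1) i0 hi0
        have htne : t ≠ n - 1 := by
          intro h
          rw [h, shift_last hq] at hts
          exact hi0q hts.symm
        have ht1 : t + 1 < n := by omega
        obtain ⟨l', j, hham', hlen', hcyc', hj, hjt, hpres⟩ :=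
          close_path R hsym hirr hore hhamP hPpath hn t
        rw [hlenP] at hj hpres
        refine ⟨l', hham', hcyc', ?_⟩
        obtain ⟨i', hi', hp'⟩ := hpres t ht1 (fun h => hjt h.symm)
        have hA : nthd lP t = nthd l i0 := by rw [hnth t htn, hts]
        have hB : nthd lP (t+1) = nthd l ((i0+1) % n) := by
          rw [hnth (t+1) ht1]
          congr 1
          rw [hsucc t, hts]
        refine ⟨i', hi', ?_⟩
        rw [hA, hB] at hp'
        rcases hpair with ⟨e1, e2⟩ | ⟨e1, e2⟩ <;> rw [e1, e2] at hp'
        · exact hp'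
        · rcases hp' with h | h
          · exact Or.inr h
          · exact Or.inl h
      · have hcycR : CycL R l := by
          intro i hi
          rcases hcyc i hi with h | ⟨h1, h2⟩ | ⟨h1, h2⟩
          · exact h
          · exact absurd ⟨i, hi, Or.inl ⟨h1, h2⟩⟩ hcd
          · exact absurd ⟨i, hi, Or.inr ⟨h1, h2⟩⟩ hcd
        exact ⟨l, hham, hcycR, i0, hi0, hpair⟩


lemma eih {R : V → V → Prop} (hsym : ∀ a b, R a b → R b a) (hirr : ∀ a, ¬ R a a)
    (hore : ∀ x y : V, x ≠ y → Fintype.card V + 1 ≤ degR R x + degR R y)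
    (hn : 3 ≤ Fintype.card V) {x y : V} (hxy : R x y) :
    ∃ l, IsHam l ∧ CycL R l ∧ ∃ i, i < l.length ∧ pairC l i x y :=
  eih_aux hn _ R le_rfl hsym hirr hore x y hxy

lemma qlem {R : V → V → Prop} (hsym : ∀ a b, R a b → R b a)
    {lC : List V} (hham : IsHam lC) (hcyc : CycL R lC) (hn : 3 ≤ Fintype.card V)
    {x y : V} (hxy : R x y) (hxyne : x ≠ y)
    (hnadj : ∀ i, i < lC.length → ¬ pairC lC i x y) :
    ∃ lP p', IsHam lP ∧ lP.length = lC.length ∧ PathL R lP ∧ p' + 1 < lC.length ∧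
      nthd lP p' = y ∧ nthd lP (p'+1) = x ∧
      ∀ q, q + 1 < lC.length → q ≠ p' →
        ∃ i, i < lC.length ∧ pairC lC i (nthd lP q) (nthd lP (q+1)) := by
  have hlen : lC.length = Fintype.card V := ham_length hham
  set n := lC.length with hndef
  have hn0 : 0 < n := by omega
  obtain ⟨ix, hix, hx0⟩ := exists_index hham x
  set lC' := lC.rotate ix with hlC'
  have hlenC' : lC'.length = n := by rw [hlC', List.length_rotate]
  have hhamC' : IsHam lC' := isham_rotate hham ix
  have hcycC' : CycL R lC' := cycL_rotate hcyc ix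
  have hnthC' : ∀ i, i < n → nthd lC' i = nthd lC ((i + ix) % n) := fun i hi =>
    nthd_rotate (by omega)
  have hx0' : nthd lC' 0 = x := by
    rw [hnthC' 0 hn0]
    rw [Nat.zero_add, Nat.mod_eq_of_lt hix]
    exact hx0
  have htransfer : ∀ i a b, i < n → pairC lC' i a b → ∃ i', i' < n ∧ pairC lC i' a b := by
    intro i a b hi hp
    exact ⟨(i + ix) % n, Nat.mod_lt _ hn0, pairC_rotate (by omega) hp⟩
  have hnadj' : ∀ i, i < n → ¬ pairC lC' i x y := by
    intro i hi hp
    obtain ⟨i', hi', hp'⟩ := htransfer i x y hi hp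
    exact hnadj i' hi' hp'
  obtain ⟨r, hr, hy⟩ := exists_index hhamC' y
  rw [hlenC'] at hr
  have hr0 : r ≠ 0 := by
    intro h; rw [h, hx0'] at hy; exact hxyne hy
  have hr1 : r ≠ 1 := by
    intro h
    apply hnadj' 0 hn0
    left
    rw [hlenC']
    refine ⟨hx0', ?_⟩
    rw [Nat.zero_add, Nat.mod_eq_of_lt (by omega), ← h]
    exact hy
  have hrn1 : r ≠ n - 1 := by
    intro h
    apply hnadj' (n-1) (by omega)
    right
    rw [hlenC']
    have hmod : (n - 1 + 1) % n = 0 := by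
      have : n - 1 + 1 = n := by omega
      rw [this, Nat.mod_self]
    rw [hmod]
    exact ⟨h ▸ hy, hx0'⟩
  have hr2 : 2 ≤ r ∧ r ≤ n - 2 := by omega
  set A := (lC'.drop 1).take r with hA
  set B := (lC'.drop (r+1)).reverse with hB
  set Q := A ++ (x :: B) with hQdef
  have hAlen : A.length = r := by
    rw [hA, List.length_take, List.length_drop, hlenC']
    omega
  have hBlen : B.length = n - (r+1) := by
    rw [hB, List.length_reverse, List.length_drop, hlenC']
  have hQlen : Q.length = n := by
    rw [hQdef, List.length_append, hAlen, List.length_cons, hBlen]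
    omega
  have hQnth : ∀ i, i < n →
      nthd Q i = if i < r then nthd lC' (i+1) else if i = r then x else nthd lC' (n + r - i) := by
    intro i hi
    by_cases h1 : i < r
    · rw [if_pos h1, hQdef, nthd_append_left (by omega), hA,
        nthd_take h1 (by rw [List.length_drop, hlenC']; omega), nthd_drop (by rw [hlenC']; omega)]
      congr 1
      omega
    · rw [if_neg h1]
      rw [hQdef, nthd_append_right (by omega) (by rw [List.length_append] at hQlen; omega)]
      rw [hAlen]
      by_cases h2 : i = r
      · rw [if_pos h2, h2, Nat.sub_self]
        rfl
      · rw [if_neg h2]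
        have hir : r < i := by omega
        have : i - r = (i - r - 1) + 1 := by omega
        rw [this]
        show nthd B (i - r - 1) = _
        rw [hB, nthd_reverse (by rw [List.length_drop, hlenC']; omega)]
        rw [List.length_drop, hlenC']
        rw [nthd_drop (by rw [hlenC']; omega)]
        congr 1
        omega
  have hperm : Q.Perm lC' := by
    have hne : lC' ≠ [] := by
      intro h
      rw [h] at hlenC'; simp at hlenC'; omega
    have hs1 : (x :: B).Perm (x :: lC'.drop (r+1)) := List.Perm.cons x (List.reverse_perm _)
    have hs2 : Q.Perm (A ++ (x :: lC'.drop (r+1))) := List.Perm.append_left A hs1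
    have hs3 : A ++ (x :: lC'.drop (r+1)) = (A ++ [x]) ++ lC'.drop (r+1) := by
      rw [List.append_assoc]; rfl
    have hs4 : ((A ++ [x]) ++ lC'.drop (r+1)).Perm (([x] ++ A) ++ lC'.drop (r+1)) :=
      List.Perm.append_right _ List.perm_append_comm
    have hs6 : A ++ lC'.drop (r+1) = lC'.drop 1 := by
      rw [hA]
      have hdd : lC'.drop (r+1) = (lC'.drop 1).drop r := by
        rw [List.drop_drop]
        congr 1
        omega
      rw [hdd, List.take_append_drop]
    have hhead : lC'.head hne = x := by
      rw [← hx0', nthd_eq_getElem (by omega : 0 < lC'.length), List.getElem_zero]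
    refine hs2.trans ?_
    rw [hs3]
    refine hs4.trans ?_
    show (x :: (A ++ lC'.drop (r+1))).Perm lC'
    rw [hs6, List.drop_one, ← hhead, List.cons_head_tail]
  have hhamQ : IsHam Q := ⟨hperm.nodup_iff.mpr hhamC'.1, fun v => hperm.mem_iff.mpr (hhamC'.2 v)⟩
  have hmodid : ∀ i, i < n → (i + 1) % n = i + 1 ∨ (i = n - 1 ∧ (i+1) % n = 0) := by
    intro i hi
    rcases Nat.lt_or_ge (i+1) n with h | h
    · exact Or.inl (Nat.mod_eq_of_lt h)
    · right
      have h1 : i = n - 1 := by omega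
      have h2 : i + 1 = n := by omega
      exact ⟨h1, by rw [h2, Nat.mod_self]⟩
  have hcycC'' : ∀ i, i + 1 < n → R (nthd lC' i) (nthd lC' (i+1)) := by
    intro i hi
    have := hcycC' i (by omega)
    rwa [hlenC', Nat.mod_eq_of_lt (by omega)] at this
  have hcycLast : R (nthd lC' (n-1)) (nthd lC' 0) := by
    have := hcycC' (n-1) (by omega)
    rw [hlenC'] at this
    have h2 : (n - 1 + 1) % n = 0 := by
      have : n - 1 + 1 = n := by omega
      rw [this, Nat.mod_self]
    rwa [h2] at this
  have hQlt : ∀ i, i < r → nthd Q i = nthd lC' (i+1) := by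
    intro i hi
    rw [hQnth i (by omega), if_pos hi]
  have hQr : nthd Q r = x := by
    rw [hQnth r (by omega), if_neg (by omega), if_pos rfl]
  have hQgt : ∀ i, r < i → i < n → nthd Q i = nthd lC' (n + r - i) := by
    intro i h1 h2
    rw [hQnth i h2, if_neg (by omega), if_neg (by omega)]
  have hpathQ : PathL R Q := by
    intro i hi
    rw [hQlen] at hi
    rcases Nat.lt_or_ge (i+1) r with h1 | h1
    · rw [hQlt i (by omega), hQlt (i+1) h1]
      exact hcycC'' (i+1) (by omega)
    rcases Nat.eq_or_lt_of_le h1 with h2 | h2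
    · -- r = i + 1
      rw [hQlt i (by omega), ← h2, hy, hQr]
      exact hsym _ _ hxy
    rcases Nat.eq_or_lt_of_le (by omega : r ≤ i) with h3 | h3
    · -- r = i
      rw [← h3, hQr, hQgt (r+1) (by omega) (by omega)]
      have he : n + r - (r+1) = n - 1 := by omega
      rw [he, ← hx0']
      exact hsym _ _ hcycLast
    · -- r < i
      rw [hQgt i h3 (by omega), hQgt (i+1) (by omega) (by omega)]
      have he : n + r - i = (n + r - (i+1)) + 1 := by omega
      rw [he]
      exact hsym _ _ (hcycC'' (n + r - (i+1)) (by omega))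
  refine ⟨Q, r - 1, hhamQ, by omega, hpathQ, by omega, ?_, ?_, ?_⟩
  · rw [hQlt (r-1) (by omega)]
    have : r - 1 + 1 = r := by omega
    rw [this]
    exact hy
  · have : r - 1 + 1 = r := by omega
    rw [this, hQr]
  · intro q hq hqne
    rcases Nat.lt_or_ge q (r-1) with h1 | h1
    · refine htransfer (q+1) _ _ (by omega) ?_
      left
      rw [hlenC', Nat.mod_eq_of_lt (by omega)]
      rw [hQlt q (by omega), hQlt (q+1) (by omega)]
      exact ⟨rfl, rfl⟩
    rcases Nat.eq_or_lt_of_le (by omega : r ≤ q) with h2 | h2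
    · -- r = q
      refine htransfer (n-1) _ _ (by omega) ?_
      right
      rw [hlenC']
      have hm : (n - 1 + 1) % n = 0 := by
        have : n - 1 + 1 = n := by omega
        rw [this, Nat.mod_self]
      rw [hm]
      rw [← h2, hQr, hQgt (r+1) (by omega) (by omega)]
      have he : n + r - (r+1) = n - 1 := by omega
      rw [he]
      exact ⟨rfl, hx0'⟩
    · -- r < q
      refine htransfer (n + r - q - 1) _ _ (by omega) ?_
      right
      rw [hlenC', Nat.mod_eq_of_lt (by omega : n + r - q - 1 + 1 < n)]
      rw [hQgt q h2 (by omega), hQgt (q+1) (by omega) (by omega)]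
      have he1 : n + r - q - 1 = n + r - (q+1) := by omega
      have he2 : n + r - q - 1 + 1 = n + r - q := by omega
      rw [he2, he1]
      exact ⟨rfl, rfl⟩


lemma cycle_rotate_path {R : V → V → Prop} {lZ : List V} (hham : IsHam lZ)
    (hn3 : 3 ≤ Fintype.card V) {p0 : ℕ} (hp0 : p0 < lZ.length)
    (hR : ∀ i, i < lZ.length → i ≠ p0 → R (nthd lZ i) (nthd lZ ((i+1) % lZ.length))) :
    ∃ lP, IsHam lP ∧ lP.length = lZ.length ∧ PathL R lP ∧
      nthd lP (lZ.length - 1) = nthd lZ p0 ∧ nthd lP 0 = nthd lZ ((p0+1) % lZ.length) := by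
  have hlen : lZ.length = Fintype.card V := ham_length hham
  set n := lZ.length with hndef
  have hn0 : 0 < n := by omega
  set lP := lZ.rotate (p0+1) with hlP
  have hlenP : lP.length = n := by rw [hlP, List.length_rotate]
  have hnth : ∀ i, i < n → nthd lP i = nthd lZ ((i + (p0+1)) % n) := fun i hi =>
    nthd_rotate (by omega)
  have hsucc : ∀ i : ℕ, (i + 1 + (p0+1)) % n = ((i + (p0+1)) % n + 1) % n := by
    intro i
    rw [Nat.mod_add_mod]
    congr 1
    omega
  refine ⟨lP, isham_rotate hham (p0+1), hlenP, ?_, ?_, ?_⟩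
  · intro i hi
    rw [hlenP] at hi
    rw [hnth i (by omega), hnth (i+1) (by omega), hsucc i]
    exact hR _ (Nat.mod_lt _ hn0) (shift_ne_special hp0 hi)
  · rw [hnth (n-1) (by omega), shift_last hp0]
  · rw [hnth 0 hn0, Nat.zero_add]


end Graphs

section Glue
variable {V : Type} [Fintype V] [DecidableEq V] [Inhabited V] {c : ℕ}

noncomputable def Lset (M : HCMultigraph V (Fin c)) (x y : V) : Finset (Fin c) :=
  (Set.toFinite {γ : Fin c | ∃ e : M.E, M.ends e = s(x, y) ∧ M.col e = γ}).toFinset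

lemma mem_Lset {M : HCMultigraph V (Fin c)} {x y : V} {γ : Fin c} :
    γ ∈ Lset M x y ↔ ∃ e : M.E, M.ends e = s(x, y) ∧ M.col e = γ := by
  simp [Lset]

lemma Lset_symm (M : HCMultigraph V (Fin c)) (x y : V) : Lset M x y = Lset M y x := by
  ext γ
  rw [mem_Lset, mem_Lset]
  constructor <;> rintro ⟨e, he, hc⟩ <;> exact ⟨e, he.trans (Sym2.eq_swap), hc⟩

def Drel (M : HCMultigraph V (Fin c)) (x y : V) : Prop := 2 ≤ (Lset M x y).card

lemma drel_iff {M : HCMultigraph V (Fin c)} {x y : V} :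
    M.DynamicEdgeSet (fun a b : Fin c => a ≠ b) x y ↔ Drel M x y := by
  constructor
  · rintro ⟨e, he, f, hf, h1, _⟩
    have hne : M.col e ≠ M.col f := by
      intro h
      exact h1 (by rw [h])
    apply Finset.one_lt_card.mpr
    exact ⟨M.col e, mem_Lset.mpr ⟨e, he, rfl⟩, M.col f, mem_Lset.mpr ⟨f, hf, rfl⟩, hne⟩
  · intro h
    obtain ⟨γ1, hγ1, γ2, hγ2, hne⟩ := Finset.one_lt_card.mp h
    obtain ⟨e, hee, hec⟩ := mem_Lset.mp hγ1
    obtain ⟨f, hfe, hfc⟩ := mem_Lset.mp hγ2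
    have hcolne : M.col e ≠ M.col f := by rw [hec, hfc]; exact hne
    refine ⟨e, hee, f, hfe, ?_, ?_⟩
    · intro hsub
      have h1 : M.col f ∈ HCMultigraph.NH (fun a b : Fin c => a ≠ b) (M.col e) := hcolne
      have h2 := hsub h1
      simp [HCMultigraph.NH] at h2
    · intro hsub
      have h1 : M.col e ∈ HCMultigraph.NH (fun a b : Fin c => a ≠ b) (M.col f) := hcolne.symm
      have h2 := hsub h1
      simp [HCMultigraph.NH] at h2

lemma degR_eq_ncard (R : V → V → Prop) (x : V) : degR R x = {v | R x v}.ncard := by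
  classical
  unfold degR
  rw [← Set.ncard_coe_finset]
  congr 1
  ext v
  simp

lemma dyndeg_eq (M : HCMultigraph V (Fin c)) (x : V) :
    M.dynDegree (fun a b : Fin c => a ≠ b) x = degR (Drel M) x := by
  rw [HCMultigraph.dynDegree, degR_eq_ncard]
  congr 1
  ext v
  exact drel_iff

lemma drel_symm {M : HCMultigraph V (Fin c)} {x y : V} (h : Drel M x y) : Drel M y x := by
  unfold Drel at h ⊢
  rwa [Lset_symm]

lemma Lset_self (M : HCMultigraph V (Fin c)) (x : V) : Lset M x x = ∅ := by
  ext γ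
  rw [mem_Lset]
  simp only [Finset.notMem_empty, iff_false]
  rintro ⟨e, he, _⟩
  exact M.loopless e (by rw [he]; exact Sym2.mk_isDiag_iff.mpr rfl)

lemma drel_irrefl (M : HCMultigraph V (Fin c)) (x : V) : ¬ Drel M x x := by
  unfold Drel
  rw [Lset_self]
  simp

lemma drel_ne {M : HCMultigraph V (Fin c)} {x y : V} (h : Drel M x y) : x ≠ y := by
  rintro rfl
  exact drel_irrefl M x h

noncomputable def LsOf (M : HCMultigraph V (Fin c)) (l : List V) : List (Finset (Fin c)) :=
  (List.range l.length).map (fun i => Lset M (nthd l i) (nthd l ((i+1) % l.length)))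

lemma LsOf_length (M : HCMultigraph V (Fin c)) (l : List V) : (LsOf M l).length = l.length := by
  simp [LsOf]

lemma LsOf_nthd [Inhabited (Fin c)] (M : HCMultigraph V (Fin c)) {l : List V} {i : ℕ}
    (h : i < l.length) :
    nthd (LsOf M l) i = Lset M (nthd l i) (nthd l ((i+1) % l.length)) := by
  rw [LsOf, nthd_eq_getElem (by simp [h])]
  simp only [List.getElem_map, List.getElem_range]

lemma LsOf_mem {M : HCMultigraph V (Fin c)} {l : List V} {s : Finset (Fin c)}
    (hs : s ∈ LsOf M l) : ∃ i, i < l.length ∧ s = Lset M (nthd l i) (nthd l ((i+1) % l.length)) := by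
  simp only [LsOf, List.mem_map, List.mem_range] at hs
  obtain ⟨i, hi, hh⟩ := hs
  exact ⟨i, hi, hh.symm⟩

lemma LsOf_card {M : HCMultigraph V (Fin c)} {l : List V} (hcyc : CycL (Drel M) l) :
    ∀ s ∈ LsOf M l, 2 ≤ s.card := by
  intro s hs
  obtain ⟨i, hi, rfl⟩ := LsOf_mem hs
  exact hcyc i hi

lemma assemble [Inhabited (Fin c)] (M : HCMultigraph V (Fin c)) {l : List V}
    (hham : IsHam l) (hn3 : 3 ≤ l.length) {cs : List (Fin c)} (hlen : cs.length = l.length)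
    (hedges : ∀ i, i < l.length → nthd cs i ∈ Lset M (nthd l i) (nthd l ((i+1) % l.length)))
    (hcons : ∀ i, i + 1 < l.length → nthd cs i ≠ nthd cs (i+1))
    (hwrap : nthd cs (l.length - 1) ≠ nthd cs 0) :
    ∃ (k : ℕ) (x : ℕ → V) (e : ℕ → M.E),
      M.IsHCycle (fun a b => a ≠ b) k x e ∧ ∀ v : V, ∃ i ≤ k, x i = v := by
  have hch : ∀ i, i < l.length → ∃ ee : M.E,
      M.ends ee = s(nthd l i, nthd l ((i+1) % l.length)) ∧ M.col ee = nthd cs i :=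
    fun i hi => mem_Lset.mp (hedges i hi)
  set k := l.length - 1 with hk
  have hkl : k + 1 = l.length := by omega
  set ef : ℕ → M.E := fun i => if h : i < l.length then (hch i h).choose else (hch 0 (by omega)).choose
    with hef
  have hends : ∀ i, i < l.length → M.ends (ef i) = s(nthd l i, nthd l ((i+1) % l.length)) := by
    intro i hi
    rw [hef]
    simp only [dif_pos hi]
    exact (hch i hi).choose_spec.1
  have hcols : ∀ i, i < l.length → M.col (ef i) = nthd cs i := by
    intro i hi
    rw [hef]
    simp only [dif_pos hi]
    exact (hch i hi).choose_spec.2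
  refine ⟨k, fun i => nthd l i, ef, ⟨?_, ?_, ?_, ?_, ?_⟩, ?_⟩
  · intro i hi j hj heq
    exact nthd_inj hham.1 (by omega) (by omega) heq
  · intro i hik
    show M.ends (ef i) = _
    have hmod : (i+1) % l.length = i + 1 := Nat.mod_eq_of_lt (by omega)
    have h := hends i (by omega)
    rw [hmod] at h
    exact h
  · show M.ends (ef k) = _
    have hmod : (k+1) % l.length = 0 := by rw [hkl, Nat.mod_self]
    have h := hends k (by omega)
    rw [hmod] at h
    exact h
  · intro i hik
    show M.col (ef i) ≠ M.col (ef (i+1))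
    rw [hcols i (by omega), hcols (i+1) (by omega)]
    exact hcons i (by omega)
  · show M.col (ef k) ≠ M.col (ef 0)
    rw [hcols k (by omega), hcols 0 (by omega)]
    exact hwrap
  · intro v
    obtain ⟨i, hi, he⟩ := exists_index hham v
    exact ⟨i, by omega, he⟩

end Glue
end Stmt14aux

open Stmt14aux in
theorem stmt14 {V : Type} [Fintype V] (c : ℕ) (hc : 3 ≤ c)
    (M : HCMultigraph V (Fin c))
    (h2 : ∀ u : V, ∃ e ∈ M.Incident u, ∃ f ∈ M.Incident u, M.col e ≠ M.col f)
    (h3 : ∃ u : V, ∃ e ∈ M.Incident u, ∃ f ∈ M.Incident u, ∃ g ∈ M.Incident u,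
      M.col e ≠ M.col f ∧ M.col e ≠ M.col g ∧ M.col f ≠ M.col g)
    (hOre : ∀ x y : V, x ≠ y →
      Fintype.card V + 1 ≤
        M.dynDegree (fun a b => a ≠ b) x + M.dynDegree (fun a b => a ≠ b) y) :
    ∃ (k : ℕ) (x : ℕ → V) (e : ℕ → M.E),
      M.IsHCycle (fun a b => a ≠ b) k x e ∧ ∀ v : V, ∃ i ≤ k, x i = v := by
  classical
  obtain ⟨u, ea, hea, eb, heb, ec, hec, hab2, hac2, hbc2⟩ := h3
  letI : Inhabited V := ⟨u⟩
  letI : Inhabited (Fin c) := ⟨⟨0, by omega⟩⟩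
  set D := Drel M with hD
  have hsymD : ∀ a b : V, D a b → D b a := fun a b h => drel_symm h
  have hirrD : ∀ a : V, ¬ D a a := fun a => drel_irrefl M a
  set nn := Fintype.card V with hnn
  have horeD : ∀ x y : V, x ≠ y → nn + 1 ≤ degR D x + degR D y := by
    intro x y hxy
    have h := hOre x y hxy
    rwa [dyndeg_eq, dyndeg_eq] at h
  obtain ⟨w0, hw0⟩ := Sym2.mem_iff_exists.mp hea
  have hw0u : w0 ≠ u := by
    rintro rfl
    exact M.loopless ea (by rw [hw0]; exact Sym2.mk_isDiag_iff.mpr rfl)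
  have hcard2 : 2 ≤ nn := Fintype.one_lt_card_iff.mpr ⟨u, w0, Ne.symm hw0u⟩
  have hdegb : ∀ x : V, degR D x ≤ nn - 1 := by
    intro x
    rw [degR_eq_ncard]
    have hsub : {v | D x v} ⊆ ({x}ᶜ : Set V) := by
      intro v hv
      simp only [Set.mem_compl_iff, Set.mem_singleton_iff]
      rintro rfl
      exact hirrD _ hv
    calc {v | D x v}.ncard ≤ ({x}ᶜ : Set V).ncard := Set.ncard_le_ncard hsub (Set.toFinite _)
      _ = nn - 1 := by
        rw [Set.compl_eq_univ_diff, Set.ncard_diff_singleton_of_mem (Set.mem_univ x),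
          Set.ncard_univ, Nat.card_eq_fintype_card]
  obtain ⟨x0, y0, hxy0⟩ := Fintype.one_lt_card_iff.mp hcard2
  have hn3 : 3 ≤ nn := by
    have h1 := horeD x0 y0 hxy0
    have h2 := hdegb x0
    have h3 := hdegb y0
    omega
  have hDne : ∃ a b : V, D a b := by
    by_contra hno
    push_neg at hno
    have hz : ∀ z : V, degR D z = 0 := by
      intro z
      rw [degR_eq_ncard]
      have he : {v | D z v} = ∅ := by
        ext v
        simp only [Set.mem_setOf_eq, Set.mem_empty_iff_false, iff_false]
        exact hno z v
      rw [he, Set.ncard_empty]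
    have h := horeD x0 y0 hxy0
    rw [hz x0, hz y0] at h
    omega
  obtain ⟨a0, b0, hDa0⟩ := hDne
  obtain ⟨lC, hhamC, hcycC, -⟩ := eih hsymD hirrD horeD hn3 hDa0
  have hnC : lC.length = nn := ham_length hhamC
  rcases cyccol (Ls := LsOf M lC) (by rw [LsOf_length, hnC]; omega) (LsOf_card hcycC) with
    ⟨cs, hcl, hcm, hcc, hcw⟩ | ⟨hodd, x1, x2, hx12, hall⟩
  · rw [LsOf_length] at hcl hcm hcc hcw
    refine assemble M hhamC (by omega) hcl ?_ hcc hcw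
    intro i hi
    have h := hcm i hi
    rwa [LsOf_nthd M hi] at h
  · rw [LsOf_length, hnC] at hodd
    have hallpairs : ∀ i, i < lC.length →
        Lset M (nthd lC i) (nthd lC ((i+1) % lC.length)) = {x1, x2} := by
      intro i hi
      have hmem : Lset M (nthd lC i) (nthd lC ((i+1) % lC.length)) ∈ LsOf M lC := by
        rw [← LsOf_nthd M hi, nthd_eq_getElem (by rw [LsOf_length]; exact hi)]
        exact List.getElem_mem _
      exact hall _ hmem
    have hγex : ∃ g : M.E, u ∈ M.ends g ∧ M.col g ∉ ({x1, x2} : Finset (Fin c)) := by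
      by_contra hng
      push_neg at hng
      have h1 := hng ea hea
      have h2 := hng eb heb
      have h3 := hng ec hec
      have hcard3 : ({M.col ea, M.col eb, M.col ec} : Finset (Fin c)).card = 3 := by
        rw [Finset.card_insert_of_notMem (by simp [hab2, hac2]),
          Finset.card_insert_of_notMem (by simp [hbc2]), Finset.card_singleton]
      have hsub : ({M.col ea, M.col eb, M.col ec} : Finset (Fin c)) ⊆ {x1, x2} := by
        intro z hz
        simp only [Finset.mem_insert, Finset.mem_singleton] at hz
        rcases hz with rfl | rfl | rfl
        · exact h1
        · exact h2
        · exact h3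
      have hle := Finset.card_le_card hsub
      have hp2 := pair_card_le (C := Fin c) (a := x1) (b := x2)
      omega
    obtain ⟨g, hgu, hgns⟩ := hγex
    obtain ⟨w, hw⟩ := Sym2.mem_iff_exists.mp hgu
    have hwu : w ≠ u := by
      rintro rfl
      exact M.loopless g (by rw [hw]; exact Sym2.mk_isDiag_iff.mpr rfl)
    have hγmem : M.col g ∈ Lset M u w := mem_Lset.mpr ⟨g, hw, rfl⟩
    by_cases hEx : ∃ p q : V, D p q ∧ Lset M p q ≠ {x1, x2}
    · -- CASE E : some dynamic pair with a different list
      obtain ⟨p, q, hDpq, hLpq⟩ := hEx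
      have hpq : p ≠ q := drel_ne hDpq
      have hnadj : ∀ i, i < lC.length → ¬ pairC lC i p q := by
        intro i hi hpair
        apply hLpq
        rcases hpair with ⟨e1, e2⟩ | ⟨e1, e2⟩
        · rw [← e1, ← e2]; exact hallpairs i hi
        · rw [Lset_symm, ← e1, ← e2]; exact hallpairs i hi
      have hn4 : 4 ≤ nn := by
        rcases Nat.lt_or_ge nn 4 with h4 | h4
        · exfalso
          have h3n : lC.length = 3 := by omega
          obtain ⟨ip, hip, hvp⟩ := exists_index hhamC p
          obtain ⟨iq, hiq, hvq⟩ := exists_index hhamC q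
          have hipq : ip ≠ iq := by
            rintro rfl
            exact hpq (hvp.symm.trans hvq)
          rw [h3n] at hip hiq
          have hcases : iq = (ip+1) % 3 ∨ ip = (iq+1) % 3 := by omega
          rcases hcases with h | h
          · exact hnadj ip (by omega) (Or.inl ⟨hvp, by rw [h3n, ← h]; exact hvq⟩)
          · exact hnadj iq (by omega) (Or.inr ⟨hvq, by rw [h3n, ← h]; exact hvp⟩)
        · exact h4
      obtain ⟨lP, p', hhamP, hlenP, hpathP, hp'1, hyv, hxv, hpres⟩ :=
        qlem hsymD hhamC hcycC hn3 hDpq hpq hnadj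
      obtain ⟨l', j, hham', hlen', hcyc', hj, hjp', hpres'⟩ :=
        close_path D hsymD hirrD horeD hhamP hpathP hn3 p'
      rw [hlenP] at hj hpres' hlen'
      obtain ⟨ipq, hipq', hppq⟩ := hpres' p' hp'1 (fun h => hjp' h.symm)
      rw [hyv, hxv] at hppq
      obtain ⟨qq, hqq1, hqqj, hqqp⟩ : ∃ qq, qq + 1 < lC.length ∧ qq ≠ j ∧ qq ≠ p' := by
        rw [hnC]
        have hjp'' : j ≠ p' := hjp'
        by_cases h0 : j = 0 ∨ p' = 0
        · by_cases h1 : j = 1 ∨ p' = 1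
          · rcases h0 with h0 | h0 <;> rcases h1 with h1 | h1 <;>
              exact ⟨2, by omega, by omega, by omega⟩
          · push_neg at h1
            exact ⟨1, by omega, by omega, by omega⟩
        · push_neg at h0
          exact ⟨0, by omega, by omega, by omega⟩
      obtain ⟨iqq, hiqq, hpqq⟩ := hpres' qq hqq1 hqqj
      obtain ⟨icc, hicc, hpcc⟩ := hpres qq hqq1 hqqp
      have hLqq : Lset M (nthd lP qq) (nthd lP (qq+1)) = {x1, x2} := by
        rcases hpcc with ⟨e1, e2⟩ | ⟨e1, e2⟩
        · rw [← e1, ← e2]; exact hallpairs icc hicc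
        · rw [Lset_symm, ← e1, ← e2]; exact hallpairs icc hicc
      rcases cyccol (Ls := LsOf M l') (by rw [LsOf_length, hlen', hnC]; omega)
          (LsOf_card hcyc') with
        ⟨cs, hcl, hcm, hcc, hcw⟩ | ⟨hodd', y1, y2, hy12, hall'⟩
      · rw [LsOf_length] at hcl hcm hcc hcw
        refine assemble M hham' (by rw [hlen', hnC]; omega) hcl ?_ hcc hcw
        intro i hi
        have h := hcm i hi
        rwa [LsOf_nthd M hi] at h
      · exfalso
        have hval : ∀ i aa bb, i < l'.length → pairC l' i aa bb →
            Lset M aa bb = {y1, y2} := by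
          intro i aa bb hi hpair
          have hmem : Lset M (nthd l' i) (nthd l' ((i+1) % l'.length)) ∈ LsOf M l' := by
            rw [← LsOf_nthd M hi, nthd_eq_getElem (by rw [LsOf_length]; exact hi)]
            exact List.getElem_mem _
          have hv := hall' _ hmem
          rcases hpair with ⟨e1, e2⟩ | ⟨e1, e2⟩
          · rw [← e1, ← e2]; exact hv
          · rw [Lset_symm M aa bb, ← e1, ← e2]; exact hv
        have h1 : Lset M q p = {y1, y2} := hval ipq _ _ hipq' hppq
        have h2 : Lset M (nthd lP qq) (nthd lP (qq+1)) = {y1, y2} := hval iqq _ _ hiqq hpqq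
        apply hLpq
        calc Lset M p q = Lset M q p := Lset_symm M p q
          _ = {y1, y2} := h1
          _ = Lset M (nthd lP qq) (nthd lP (qq+1)) := h2.symm
          _ = {x1, x2} := hLqq
    · -- CASE F : all dynamic pairs have list {x1, x2}
      push_neg at hEx
      have hnDuw : ¬ D u w := by
        intro h
        apply hgns
        rw [← hEx u w h]
        exact hγmem
      set D' := fun pp qq : V => D pp qq ∨ (pp = u ∧ qq = w) ∨ (pp = w ∧ qq = u) with hD'
      have hsymD' : ∀ a b, D' a b → D' b a := by
        intro a b h
        rcases h with h | ⟨h1, h2⟩ | ⟨h1, h2⟩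
        · exact Or.inl (hsymD a b h)
        · exact Or.inr (Or.inr ⟨h2, h1⟩)
        · exact Or.inr (Or.inl ⟨h2, h1⟩)
      have hirrD' : ∀ a, ¬ D' a a := by
        intro a h
        rcases h with h | ⟨h1, h2⟩ | ⟨h1, h2⟩
        · exact hirrD a h
        · exact hwu (h2 ▸ h1 ▸ rfl)
        · exact hwu (h1 ▸ h2 ▸ rfl)
      have horeD' : ∀ x y : V, x ≠ y → nn + 1 ≤ degR D' x + degR D' y := by
        intro x y hxy
        exact le_trans (horeD x y hxy)
          (Nat.add_le_add (deg_mono (fun a b h => Or.inl h) x) (deg_mono (fun a b h => Or.inl h) y))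
      have hD'uw : D' u w := Or.inr (Or.inl ⟨rfl, rfl⟩)
      obtain ⟨lZ, hhamZ, hcycZ, p0, hp0, hpairZ⟩ := eih hsymD' hirrD' horeD' hn3 hD'uw
      have hnZ : lZ.length = nn := ham_length hhamZ
      have huniq : ∀ i, i < lZ.length → pairC lZ i u w → i = p0 := fun i hi hp =>
        pairC_unique hhamZ.1 (by omega) (fun h => hwu h.symm) hi hp0 hp hpairZ
      have hRD : ∀ i, i < lZ.length → i ≠ p0 → D (nthd lZ i) (nthd lZ ((i+1) % lZ.length)) := by
        intro i hi hip
        rcases hcycZ i hi with h | ⟨h1, h2⟩ | ⟨h1, h2⟩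
        · exact h
        · exact absurd (huniq i hi (Or.inl ⟨h1, h2⟩)) hip
        · exact absurd (huniq i hi (Or.inr ⟨h1, h2⟩)) hip
      obtain ⟨lP, hhamP, hlenP, hpathP, hlast, hfirst⟩ := cycle_rotate_path hhamZ hn3 hp0 hRD
      have hlP : lP.length = nn := by rw [hlenP, hnZ]
      have hcloseL : M.col g ∈ Lset M (nthd lP (nn - 1)) (nthd lP 0) := by
        rw [hnZ] at hlast
        rcases hpairZ with ⟨e1, e2⟩ | ⟨e1, e2⟩
        · rw [hlast, hfirst, e1, e2]
          exact hγmem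
        · rw [hlast, hfirst, e1, e2, Lset_symm M w u]
          exact hγmem
      have hDpath : ∀ i, i + 1 < nn → D (nthd lP i) (nthd lP (i+1)) := by
        intro i hi
        exact hpathP i (by rw [hlP]; omega)
      have hLpath : ∀ i, i + 1 < nn → Lset M (nthd lP i) (nthd lP (i+1)) = {x1, x2} :=
        fun i hi => hEx _ _ (hDpath i hi)
      set Ls1 := (List.range (nn - 1)).map (fun i => Lset M (nthd lP i) (nthd lP (i+1)))
        with hLs1def
      have hLs1len : Ls1.length = nn - 1 := by simp [hLs1def]
      have hLs1nth : ∀ i, i < nn - 1 → nthd Ls1 i = Lset M (nthd lP i) (nthd lP (i+1)) := by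
        intro i hi
        rw [hLs1def, nthd_eq_getElem (by simp; omega)]
        simp only [List.getElem_map, List.getElem_range]
      have hLs1card : ∀ s ∈ Ls1, 2 ≤ s.card := by
        intro s hs
        simp only [hLs1def, List.mem_map, List.mem_range] at hs
        obtain ⟨i, hi, hh⟩ := hs
        rw [← hh, hLpath i (by omega), Finset.card_pair hx12]
      obtain ⟨cs', hcl', hcm', hcc', -⟩ := grd hLs1card (M.col g)
      rw [hLs1len] at hcl' hcm' hcc'
      have hmem' : ∀ i, i < nn - 1 → nthd cs' i ∈ ({x1, x2} : Finset (Fin c)) := by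
        intro i hi
        have h := hcm' i hi
        rwa [hLs1nth i hi, hLpath i (by omega)] at h
      set cs := cs' ++ [M.col g] with hcs
      have hcslen : cs.length = nn := by
        rw [hcs, List.length_append, hcl', List.length_singleton]
        omega
      have hcsl : ∀ i, i < nn - 1 → nthd cs i = nthd cs' i := by
        intro i hi
        rw [hcs]
        exact nthd_append_left (by omega)
      have hcsr : nthd cs (nn - 1) = M.col g := by
        rw [hcs, nthd_append_right (by omega) (by simp [hcl'])]
        rw [hcl']
        have h0 : nn - 1 - (nn - 1) = 0 := by omega
        rw [h0]
        rfl
      refine assemble M hhamP (by omega) (by rw [hcslen, hlP]) ?_ ?_ ?_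
      · intro i hi
        rw [hlP] at hi
        by_cases hi' : i < nn - 1
        · rw [hcsl i hi']
          have hmod : (i+1) % lP.length = i + 1 := by rw [hlP]; exact Nat.mod_eq_of_lt (by omega)
          rw [hmod]
          have h := hcm' i hi'
          rwa [hLs1nth i hi'] at h
        · have hieq : i = nn - 1 := by omega
          have hmod : (i+1) % lP.length = 0 := by
            rw [hlP, hieq]
            have : nn - 1 + 1 = nn := by omega
            rw [this, Nat.mod_self]
          rw [hmod, hieq, hcsr]
          exact hcloseL
      · intro i hi
        rw [hlP] at hi
        by_cases h2 : i + 1 < nn - 1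
        · rw [hcsl i (by omega), hcsl (i+1) h2]
          exact hcc' i h2
        · have hieq : i + 1 = nn - 1 := by omega
          rw [hcsl i (by omega), hieq, hcsr]
          intro heq
          apply hgns
          rw [← heq]
          exact hmem' i (by omega)
      · rw [hlP, hcsr, hcsl 0 (by omega)]
        intro heq
        apply hgns
        rw [heq]
        exact hmem' 0 (by omega)
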